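/- Suppose u₀ ∈ C(Ω) satisfies F(u₀) < +∞ and F(u₀) ≤ F(u) for all u ∈ C(Ω). Then u₀ coincides on Ω with the supremum of its affine supports taken at points of Ω₋: for every x ∈ Ω, u₀(x) = sup{ℓ(x) : ℓ : ℝⁿ → ℝ affine with ℓ ≤ u₀ on cl(Ω) and ℓ(z) = u₀(z) for some z ∈ Ω₋}. -/

import Mathlib

open MeasureTheory RealInnerProductSpace
open scoped ENNReal Classical

noncomputable section

abbrev Euc (n : ℕ) := EuclideanSpace ℝ (Fin n)

/-- A set `S ⊆ ℝⁿ` has Lipschitz boundary: near each boundary point, after choosing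
a unit direction `e`, `S` is the subgraph of a Lipschitz function on `e^⊥`. -/
def HasLipschitzBoundary {n : ℕ} (S : Set (Euc n)) : Prop :=
  ∀ z ∈ frontier S, ∃ (e : Euc n) (f : Euc n → ℝ) (K : NNReal) (ρ : ℝ),
    ‖e‖ = 1 ∧ 0 < ρ ∧ LipschitzWith K f ∧
    ∀ x ∈ Metric.ball z ρ, (x ∈ S ↔ ⟪e, x⟫ < f (x - ⟪e, x⟫ • e))

set_option linter.unusedVariables false


/-- helper: finite `ℝ≥0∞` coerced to `EReal` equals real coercion of `toReal`. -/
lemma coe_fin_ereal (x : ℝ≥0∞) (hx : x ≠ ⊤) : (x : EReal) = ((x.toReal : ℝ) : EReal) := by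
  conv_lhs => rw [← ENNReal.ofReal_toReal hx]
  rw [EReal.coe_ennreal_ofReal, max_eq_left ENNReal.toReal_nonneg]

lemma real_rec_ofReal (a : ℝ) :
    a = (ENNReal.ofReal a).toReal - (ENNReal.ofReal (-a)).toReal := by
  rcases le_total 0 a with h | h
  · rw [ENNReal.toReal_ofReal h, ENNReal.ofReal_of_nonpos (neg_nonpos.2 h)]; simp
  · rw [ENNReal.ofReal_of_nonpos h, ENNReal.toReal_ofReal (neg_nonneg.2 h)]; simp

lemma real_eq_of_ofReal {a b : ℝ} (h1 : ENNReal.ofReal a = ENNReal.ofReal b)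
    (h2 : ENNReal.ofReal (-a) = ENNReal.ofReal (-b)) : a = b := by
  rw [real_rec_ofReal a, real_rec_ofReal b, h1, h2]

/-- subgradient existence for convex functions at interior points -/
lemma exists_subgradient {n : ℕ} {Ω : Set (Euc n)} (hΩopen : IsOpen Ω)
    (hΩconv : Convex ℝ Ω) {u₀ : Euc n → ℝ} (hu₀conv : ConvexOn ℝ (closure Ω) u₀)
    {z : Euc n} (hz : z ∈ Ω) :
    ∃ (p : Euc n) (c : ℝ), (∀ y ∈ closure Ω, ⟪p, y⟫ + c ≤ u₀ y) ∧ ⟪p, z⟫ + c = u₀ z := by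
  have hΩsub : Ω ⊆ closure Ω := subset_closure
  have hu₀Ω : ConvexOn ℝ Ω u₀ := hu₀conv.subset hΩsub hΩconv
  have hu₀cont : ContinuousOn u₀ Ω := hu₀Ω.continuousOn hΩopen
  set Epi : Set (Euc n × ℝ) := {q | q.1 ∈ Ω ∧ u₀ q.1 < q.2} with hEpi
  have hEpiOpen : IsOpen Epi := by
    rw [isOpen_iff_mem_nhds]
    rintro ⟨y, t⟩ ⟨hy, ht⟩
    have hcont : ContinuousAt (fun q : Euc n × ℝ => q.2 - u₀ q.1) (y, t) :=
      continuousAt_snd.sub ((hu₀cont.continuousAt (hΩopen.mem_nhds hy)).comp continuousAt_fst)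
    have h1 : {q : Euc n × ℝ | 0 < q.2 - u₀ q.1} ∈ nhds (y, t) :=
      hcont.preimage_mem_nhds (Ioi_mem_nhds (by simpa using ht))
    have h2 : {q : Euc n × ℝ | q.1 ∈ Ω} ∈ nhds (y, t) :=
      continuousAt_fst.preimage_mem_nhds (hΩopen.mem_nhds hy)
    filter_upwards [h1, h2] with q hq1 hq2
    exact ⟨hq2, by simpa using sub_pos.mp hq1⟩
  have hEpiConv : Convex ℝ Epi := by
    rintro ⟨y1, t1⟩ ⟨h1, h1'⟩ ⟨y2, t2⟩ ⟨h2, h2'⟩ a b ha hb hab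
    refine ⟨hΩconv h1 h2 ha hb hab, ?_⟩
    have hc := hu₀conv.2 (hΩsub h1) (hΩsub h2) ha hb hab
    have hs : (a • (y1, t1) + b • (y2, t2)).2 = a * t1 + b * t2 := rfl
    have hs1 : (a • (y1, t1) + b • (y2, t2)).1 = a • y1 + b • y2 := rfl
    rw [hs, hs1]
    rcases ha.lt_or_eq with ha' | ha'
    · have e1 : a * u₀ y1 < a * t1 := by exact mul_lt_mul_of_pos_left h1' ha'
      have e2 : b * u₀ y2 ≤ b * t2 := mul_le_mul_of_nonneg_left h2'.le hb
      have : a • u₀ y1 + b • u₀ y2 = a * u₀ y1 + b * u₀ y2 := rfl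
      rw [this] at hc; linarith
    · have hb1 : b = 1 := by rw [← ha'] at hab; linarith
      have e2 : b * u₀ y2 < b * t2 := by rw [hb1]; simpa using h2'
      have e1 : a * u₀ y1 ≤ a * t1 := mul_le_mul_of_nonneg_left h1'.le ha
      have : a • u₀ y1 + b • u₀ y2 = a * u₀ y1 + b * u₀ y2 := rfl
      rw [this] at hc; linarith
  have hzne : (z, u₀ z) ∉ Epi := fun h => lt_irrefl _ h.2
  obtain ⟨f, hf⟩ := geometric_hahn_banach_open_point hEpiConv hEpiOpen hzne
  set β : ℝ := f (0, 1) with hβ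
  have hfsplit : ∀ (y : Euc n) (t : ℝ), f (y, t) = f (y, 0) + t * β := by
    intro y t
    have : ((y, t) : Euc n × ℝ) = (y, 0) + t • ((0 : Euc n), (1 : ℝ)) := by
      simp [Prod.ext_iff]
    rw [this, map_add, f.map_smul, smul_eq_mul, hβ]
  have hβneg : β < 0 := by
    have h1 : f (z, u₀ z + 1) < f (z, u₀ z) := hf _ ⟨hz, by simp⟩
    have e1 := hfsplit z (u₀ z + 1)
    have e2 := hfsplit z (u₀ z)
    nlinarith
  have key : ∀ y ∈ Ω, f (y, 0) + u₀ y * β ≤ f (z, 0) + u₀ z * β := by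
    intro y hy
    by_contra hlt
    push_neg at hlt
    set G := f (y, 0) + u₀ y * β - (f (z, 0) + u₀ z * β) with hG
    have hGpos : 0 < G := by rw [hG]; linarith
    set ε := G / (2 * (-β)) with hε
    have hεpos : 0 < ε := div_pos hGpos (by linarith)
    have hmem : ((y, u₀ y + ε) : Euc n × ℝ) ∈ Epi := ⟨hy, show u₀ y < u₀ y + ε by linarith⟩
    have := hf _ hmem
    rw [hfsplit y (u₀ y + ε), hfsplit z (u₀ z)] at this
    have hεβ : ε * β = -(G / 2) := by
      rw [hε]
      have hb0 : β ≠ 0 := ne_of_lt hβneg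
      field_simp
    nlinarith
  set q : Euc n := (InnerProductSpace.toDual ℝ (Euc n)).symm
    (f.comp (ContinuousLinearMap.inl ℝ (Euc n) ℝ)) with hqdef
  have hq : ∀ y : Euc n, ⟪q, y⟫ = f (y, 0) := by
    intro y
    rw [hqdef, InnerProductSpace.toDual_symm_apply]
    simp
  set p : Euc n := (-β)⁻¹ • q with hp
  have hbpos : 0 < -β := by linarith
  have hΩineq : ∀ y ∈ Ω, u₀ z + (⟪p, y⟫ - ⟪p, z⟫) ≤ u₀ y := by
    intro y hy
    have h1 := key y hy
    rw [← hq y, ← hq z] at h1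
    have h2 : ⟪p, y⟫ - ⟪p, z⟫ = (-β)⁻¹ * (⟪q, y⟫ - ⟪q, z⟫) := by
      rw [hp, real_inner_smul_left, real_inner_smul_left]; ring
    have h3 : ⟪q, y⟫ - ⟪q, z⟫ ≤ (-β) * (u₀ y - u₀ z) := by nlinarith
    rw [h2]
    have h4 : (-β)⁻¹ * (⟪q, y⟫ - ⟪q, z⟫) ≤ (-β)⁻¹ * ((-β) * (u₀ y - u₀ z)) :=
      mul_le_mul_of_nonneg_left h3 (by positivity)
    rw [← mul_assoc, inv_mul_cancel₀ (ne_of_gt hbpos), one_mul] at h4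
    linarith
  have hcl : ∀ y ∈ closure Ω, u₀ z + (⟪p, y⟫ - ⟪p, z⟫) ≤ u₀ y := by
    intro y hy
    have hwmem : (1 / 2 : ℝ) • z + (1 / 2 : ℝ) • y ∈ Ω := by
      have hseg : (1 / 2 : ℝ) • z + (1 / 2 : ℝ) • y ∈ openSegment ℝ z y :=
        ⟨1 / 2, 1 / 2, by norm_num, by norm_num, by norm_num, rfl⟩
      have := hΩconv.openSegment_interior_closure_subset_interior
        (by rwa [hΩopen.interior_eq]) hy hseg
      rwa [hΩopen.interior_eq] at this
    have h1 := hΩineq _ hwmem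
    have h2 : u₀ ((1 / 2 : ℝ) • z + (1 / 2 : ℝ) • y) ≤ (1 / 2) * u₀ z + (1 / 2) * u₀ y :=
      hu₀conv.2 (subset_closure hz) hy (by norm_num) (by norm_num) (by norm_num)
    have h3 : ⟪p, (1 / 2 : ℝ) • z + (1 / 2 : ℝ) • y⟫ = (1 / 2) * ⟪p, z⟫ + (1 / 2) * ⟪p, y⟫ := by
      rw [inner_add_right, real_inner_smul_right, real_inner_smul_right]
    rw [h3] at h1
    linarith
  exact ⟨p, u₀ z - ⟪p, z⟫, fun y hy => by linarith [hcl y hy], by ring⟩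

def Ssets {n : ℕ} (Ω Ωm : Set (Euc n)) (u₀ : Euc n → ℝ) (y : Euc n) : Set ℝ :=
  {t : ℝ | ∃ (p : Euc n) (c : ℝ),
    (∀ z ∈ closure Ω, ⟪p, z⟫ + c ≤ u₀ z) ∧
    (∃ z ∈ Ωm, ⟪p, z⟫ + c = u₀ z) ∧ t = ⟪p, y⟫ + c}

section Main

variable {n : ℕ} {Ω : Set (Euc n)} {μf : Euc n → ℝ} {u₀ : Euc n → ℝ}

theorem stmt6' (n : ℕ) (Ω : Set (Euc n))
    (hΩopen : IsOpen Ω) (hΩbdd : Bornology.IsBounded Ω) (hΩconv : Convex ℝ Ω)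
    (σm : Measure (Euc n)) [IsFiniteMeasure σm] (hσsupp : σm (frontier Ω)ᶜ = 0)
    (μf : Euc n → ℝ) (hμcont : ContinuousOn μf (closure Ω))
    (hne : {x ∈ Ω | μf x < 0}.Nonempty)
    (hzero : volume {x ∈ Ω | μf x = 0} = 0)
    (A B : ℝ → ℝ) (hAcont : Continuous A) (hAmono : Monotone A)
    (hBcont : Continuous B) (hBmono : StrictMono B)
    (CΩ : Set (Euc n → ℝ))
    (hCΩ : CΩ = {u | ConvexOn ℝ (closure Ω) u ∧
      IntegrableOn (fun x => |A (u x)|) (frontier Ω) σm})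
    (hnegpart : ∀ u ∈ CΩ, IntegrableOn (fun x => max (-(B (u x) * μf x)) 0) Ω volume)
    (F : (Euc n → ℝ) → EReal)
    (hF : ∀ u, F u = ((∫ x in frontier Ω, A (u x) ∂σm : ℝ) : EReal)
        + ((∫⁻ x in Ω, ENNReal.ofReal (B (u x) * μf x)) : ℝ≥0∞)
        - ((∫⁻ x in Ω, ENNReal.ofReal (-(B (u x) * μf x))) : ℝ≥0∞))
    (u₀ : Euc n → ℝ) (hu₀ : u₀ ∈ CΩ) (hfin : F u₀ < ⊤)
    (hmin : ∀ u ∈ CΩ, F u₀ ≤ F u) :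
    ∀ x ∈ Ω, IsLUB (Ssets Ω {x ∈ Ω | μf x < 0} u₀ x) (u₀ x) := by
  classical
  set Ωm : Set (Euc n) := {x ∈ Ω | μf x < 0} with hΩm
  have hΩsub : Ω ⊆ closure Ω := subset_closure
  have hu₀conv : ConvexOn ℝ (closure Ω) u₀ := (hCΩ ▸ hu₀).1
  have hu₀int : IntegrableOn (fun x => |A (u₀ x)|) (frontier Ω) σm := (hCΩ ▸ hu₀).2
  have hu₀cont : ContinuousOn u₀ Ω := (hu₀conv.subset hΩsub hΩconv).continuousOn hΩopen
  set S : Euc n → Set ℝ := Ssets Ω Ωm u₀ with hS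
  -- basic facts about S
  have hSmem : ∀ (y : Euc n) (t : ℝ), t ∈ S y ↔ ∃ (p : Euc n) (c : ℝ),
      (∀ z ∈ closure Ω, ⟪p, z⟫ + c ≤ u₀ z) ∧
      (∃ z ∈ Ωm, ⟪p, z⟫ + c = u₀ z) ∧ t = ⟪p, y⟫ + c := fun _ _ => Iff.rfl
  have hSne : ∀ y : Euc n, (S y).Nonempty := by
    obtain ⟨z₀, hz₀⟩ := hne
    obtain ⟨p, c, hle, heq⟩ := exists_subgradient hΩopen hΩconv hu₀conv hz₀.1
    exact fun y => ⟨⟪p, y⟫ + c, p, c, hle, ⟨z₀, hz₀, heq⟩, rfl⟩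
  have hSub : ∀ y ∈ closure Ω, u₀ y ∈ upperBounds (S y) := by
    rintro y hy t ⟨p, c, hle, _, rfl⟩
    exact hle y hy
  set w : Euc n → ℝ := fun y => sSup (S y) with hw
  have hwle : ∀ y ∈ closure Ω, w y ≤ u₀ y :=
    fun y hy => csSup_le (hSne y) (fun b hb => hSub y hy hb)
  have hweq : ∀ z ∈ Ωm, w z = u₀ z := by
    intro z hz
    obtain ⟨p, c, hle, heq⟩ := exists_subgradient hΩopen hΩconv hu₀conv hz.1
    refine le_antisymm (hwle z (hΩsub hz.1)) ?_
    have hmem : u₀ z ∈ S z := ⟨p, c, hle, ⟨z, hz, heq⟩, heq.symm⟩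
    exact le_csSup ⟨u₀ z, hSub z (hΩsub hz.1)⟩ hmem
  have haff : ∀ (p : Euc n) (c a b : ℝ), a + b = 1 → ∀ y₁ y₂ : Euc n,
      ⟪p, a • y₁ + b • y₂⟫ + c = a * (⟪p, y₁⟫ + c) + b * (⟪p, y₂⟫ + c) := by
    intro p c a b hab y₁ y₂
    rw [inner_add_right, real_inner_smul_right, real_inner_smul_right]
    linear_combination c * hab.symm
  have hwconv : ConvexOn ℝ (closure Ω) w := by
    refine ⟨hΩconv.closure, ?_⟩
    intro y₁ h₁ y₂ h₂ a b ha hb hab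
    refine csSup_le (hSne _) ?_
    rintro t ⟨p, c, hle, htouch, rfl⟩
    have m1 : ⟪p, y₁⟫ + c ≤ w y₁ :=
      le_csSup ⟨u₀ y₁, hSub y₁ h₁⟩ ⟨p, c, hle, htouch, rfl⟩
    have m2 : ⟪p, y₂⟫ + c ≤ w y₂ :=
      le_csSup ⟨u₀ y₂, hSub y₂ h₂⟩ ⟨p, c, hle, htouch, rfl⟩
    rw [haff p c a b hab y₁ y₂]
    have e1 : a * (⟪p, y₁⟫ + c) ≤ a * w y₁ := mul_le_mul_of_nonneg_left m1 ha
    have e2 : b * (⟪p, y₂⟫ + c) ≤ b * w y₂ := mul_le_mul_of_nonneg_left m2 hb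
    have : a • w y₁ + b • w y₂ = a * w y₁ + b * w y₂ := rfl
    rw [this]; linarith
  -- the modified competitor
  set v : Euc n → ℝ := fun y => if y ∈ Ω then w y else u₀ y with hv
  have hvΩ : ∀ y ∈ Ω, v y = w y := fun y hy => if_pos hy
  have hvout : ∀ (y : Euc n), y ∉ Ω → v y = u₀ y := fun y hy => if_neg hy
  have hvle : ∀ y ∈ closure Ω, v y ≤ u₀ y := by
    intro y hy
    by_cases hyΩ : y ∈ Ω
    · rw [hvΩ y hyΩ]; exact hwle y hy
    · rw [hvout y hyΩ]
  have hwv : ∀ y ∈ closure Ω, w y ≤ v y := by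
    intro y hy
    by_cases hyΩ : y ∈ Ω
    · rw [hvΩ y hyΩ]
    · rw [hvout y hyΩ]; exact hwle y hy
  have hvconv : ConvexOn ℝ (closure Ω) v := by
    refine ⟨hΩconv.closure, ?_⟩
    intro y₁ h₁ y₂ h₂ a b ha hb hab
    by_cases hc : a • y₁ + b • y₂ ∈ Ω
    · rw [hvΩ _ hc]
      have e0 := hwconv.2 h₁ h₂ ha hb hab
      have e1 : a • w y₁ + b • w y₂ ≤ a • v y₁ + b • v y₂ := by
        have : a * w y₁ ≤ a * v y₁ := mul_le_mul_of_nonneg_left (hwv y₁ h₁) ha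
        have : b * w y₂ ≤ b * v y₂ := mul_le_mul_of_nonneg_left (hwv y₂ h₂) hb
        show a * w y₁ + b * w y₂ ≤ a * v y₁ + b * v y₂
        have e3 : a * w y₁ ≤ a * v y₁ := mul_le_mul_of_nonneg_left (hwv y₁ h₁) ha
        have e4 : b * w y₂ ≤ b * v y₂ := mul_le_mul_of_nonneg_left (hwv y₂ h₂) hb
        linarith
      exact le_trans e0 e1
    · rcases ha.eq_or_lt with ha' | ha'
      · have hb1 : b = 1 := by rw [← ha'] at hab; linarith
        rw [← ha', hb1]
        simp
      rcases hb.eq_or_lt with hb' | hb'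
      · have ha1 : a = 1 := by rw [← hb'] at hab; linarith
        rw [← hb', ha1]
        simp
      have h₁' : y₁ ∉ Ω := by
        intro hy₁
        refine hc ?_
        have hseg : a • y₁ + b • y₂ ∈ openSegment ℝ y₁ y₂ := ⟨a, b, ha', hb', hab, rfl⟩
        have := hΩconv.openSegment_interior_closure_subset_interior
          (by rwa [hΩopen.interior_eq]) h₂ hseg
        rwa [hΩopen.interior_eq] at this
      have h₂' : y₂ ∉ Ω := by
        intro hy₂
        refine hc ?_
        have hseg : a • y₁ + b • y₂ ∈ openSegment ℝ y₂ y₁ := by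
          refine ⟨b, a, hb', ha', by linarith, by rw [add_comm]⟩
        have := hΩconv.openSegment_interior_closure_subset_interior
          (by rwa [hΩopen.interior_eq]) h₁ hseg
        rwa [hΩopen.interior_eq] at this
      rw [hvout _ hc, hvout _ h₁', hvout _ h₂']
      exact hu₀conv.2 h₁ h₂ ha hb hab
  have hvcont : ContinuousOn v Ω :=
    (((hwconv.subset hΩsub hΩconv).continuousOn hΩopen)).congr hvΩ
  have hfrontier_notΩ : ∀ x ∈ frontier Ω, x ∉ Ω := by
    intro x hx hxΩ
    rw [hΩopen.frontier_eq] at hx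
    exact hx.2 hxΩ
  have hvCΩ : v ∈ CΩ := by
    rw [hCΩ]
    refine ⟨hvconv, ?_⟩
    refine hu₀int.congr_fun ?_ isClosed_frontier.measurableSet
    intro x hx
    simp only [hvout x (hfrontier_notΩ x hx)]
  -- pointwise inequality on Ω
  have hptle : ∀ x ∈ Ω, B (v x) * μf x ≤ B (u₀ x) * μf x := by
    intro x hxΩ
    rcases lt_or_ge (μf x) 0 with hneg | hpos
    · rw [hvΩ x hxΩ, hweq x ⟨hxΩ, hneg⟩]
    · exact mul_le_mul_of_nonneg_right (hBmono.monotone (hvle x (hΩsub hxΩ))) hpos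
  -- measurability
  have hmes₀ : AEMeasurable (fun x => B (u₀ x) * μf x) (volume.restrict Ω) :=
    ((hBcont.comp_continuousOn hu₀cont).mul (hμcont.mono hΩsub)).aemeasurable
      hΩopen.measurableSet
  have hmesv : AEMeasurable (fun x => B (v x) * μf x) (volume.restrict Ω) :=
    ((hBcont.comp_continuousOn hvcont).mul (hμcont.mono hΩsub)).aemeasurable
      hΩopen.measurableSet
  have haele : (fun x => ENNReal.ofReal (B (v x) * μf x)) ≤ᵐ[volume.restrict Ω]
      (fun x => ENNReal.ofReal (B (u₀ x) * μf x)) :=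
    (ae_restrict_iff' hΩopen.measurableSet).2
      (Filter.Eventually.of_forall fun x hx => ENNReal.ofReal_le_ofReal (hptle x hx))
  have haele' : (fun x => ENNReal.ofReal (-(B (u₀ x) * μf x))) ≤ᵐ[volume.restrict Ω]
      (fun x => ENNReal.ofReal (-(B (v x) * μf x))) :=
    (ae_restrict_iff' hΩopen.measurableSet).2
      (Filter.Eventually.of_forall fun x hx =>
        ENNReal.ofReal_le_ofReal (neg_le_neg (hptle x hx)))
  have hPle : (∫⁻ x in Ω, ENNReal.ofReal (B (v x) * μf x)) ≤
      ∫⁻ x in Ω, ENNReal.ofReal (B (u₀ x) * μf x) := lintegral_mono_ae haele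
  have hNle : (∫⁻ x in Ω, ENNReal.ofReal (-(B (u₀ x) * μf x))) ≤
      ∫⁻ x in Ω, ENNReal.ofReal (-(B (v x) * μf x)) := lintegral_mono_ae haele'
  -- finiteness of the negative parts
  have hNfin : ∀ u ∈ CΩ, (∫⁻ x in Ω, ENNReal.ofReal (-(B (u x) * μf x))) ≠ ⊤ := by
    intro u hu
    have hint := hnegpart u hu
    have heq : ∀ x : Euc n, ENNReal.ofReal (-(B (u x) * μf x))
        = ENNReal.ofReal (max (-(B (u x) * μf x)) 0) := by
      intro x
      rcases le_total 0 (-(B (u x) * μf x)) with h | h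
      · rw [max_eq_left h]
      · rw [max_eq_right h, ENNReal.ofReal_of_nonpos h, ENNReal.ofReal_zero]
    simp_rw [heq]
    rw [← ofReal_integral_eq_lintegral_ofReal hint
      (Filter.Eventually.of_forall fun x => le_max_right _ _)]
    exact ENNReal.ofReal_ne_top
  have hN₀fin := hNfin u₀ hu₀
  have hN₁fin := hNfin v hvCΩ
  have hP₀fin : (∫⁻ x in Ω, ENNReal.ofReal (B (u₀ x) * μf x)) ≠ ⊤ := by
    intro htop
    have hc := hfin
    rw [hF u₀, htop, coe_fin_ereal _ hN₀fin] at hc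
    rw [EReal.coe_ennreal_top, EReal.coe_add_top, EReal.top_sub_coe] at hc
    exact lt_irrefl _ hc
  have hP₁fin : (∫⁻ x in Ω, ENNReal.ofReal (B (v x) * μf x)) ≠ ⊤ :=
    ne_top_of_le_ne_top hP₀fin hPle
  -- boundary integrals agree
  have hbd : ∫ x in frontier Ω, A (v x) ∂σm = ∫ x in frontier Ω, A (u₀ x) ∂σm :=
    setIntegral_congr_fun isClosed_frontier.measurableSet
      (fun x hx => by simp only [hvout x (hfrontier_notΩ x hx)])
  -- use minimality
  have hmin' := hmin v hvCΩ
  rw [hF u₀, hF v, hbd, coe_fin_ereal _ hP₀fin, coe_fin_ereal _ hN₀fin,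
    coe_fin_ereal _ hP₁fin, coe_fin_ereal _ hN₁fin] at hmin'
  norm_cast at hmin'
  have hp : (∫⁻ x in Ω, ENNReal.ofReal (B (v x) * μf x)).toReal ≤
      (∫⁻ x in Ω, ENNReal.ofReal (B (u₀ x) * μf x)).toReal :=
    ENNReal.toReal_mono hP₀fin hPle
  have hn : (∫⁻ x in Ω, ENNReal.ofReal (-(B (u₀ x) * μf x))).toReal ≤
      (∫⁻ x in Ω, ENNReal.ofReal (-(B (v x) * μf x))).toReal :=
    ENNReal.toReal_mono hN₁fin hNle
  have hPeq : (∫⁻ x in Ω, ENNReal.ofReal (B (v x) * μf x)) =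
      ∫⁻ x in Ω, ENNReal.ofReal (B (u₀ x) * μf x) :=
    (ENNReal.toReal_eq_toReal_iff' hP₁fin hP₀fin).1 (by linarith)
  have hNeq : (∫⁻ x in Ω, ENNReal.ofReal (-(B (v x) * μf x))) =
      ∫⁻ x in Ω, ENNReal.ofReal (-(B (u₀ x) * μf x)) :=
    (ENNReal.toReal_eq_toReal_iff' hN₁fin hN₀fin).1 (by linarith)
  -- a.e. equality of the integrands
  have hm0 : AEMeasurable (fun x => ENNReal.ofReal (B (u₀ x) * μf x)) (volume.restrict Ω) :=
    ENNReal.measurable_ofReal.comp_aemeasurable hmes₀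
  have hm1 : AEMeasurable (fun x => ENNReal.ofReal (B (v x) * μf x)) (volume.restrict Ω) :=
    ENNReal.measurable_ofReal.comp_aemeasurable hmesv
  have hm0' : AEMeasurable (fun x => ENNReal.ofReal (-(B (u₀ x) * μf x))) (volume.restrict Ω) :=
    ENNReal.measurable_ofReal.comp_aemeasurable hmes₀.neg
  have hm1' : AEMeasurable (fun x => ENNReal.ofReal (-(B (v x) * μf x))) (volume.restrict Ω) :=
    ENNReal.measurable_ofReal.comp_aemeasurable hmesv.neg
  have hkey1 : ∀ᵐ x ∂(volume.restrict Ω),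
      ENNReal.ofReal (B (u₀ x) * μf x) = ENNReal.ofReal (B (v x) * μf x) := by
    have hsub := lintegral_sub' hm1 hP₁fin haele
    have hz' := (lintegral_eq_zero_iff' (hm0.sub hm1)).1
      (by simp only [Pi.sub_apply]; rw [hsub, hPeq, tsub_self])
    filter_upwards [hz', haele] with x h1 h2
    have h1' : ENNReal.ofReal (B (u₀ x) * μf x) - ENNReal.ofReal (B (v x) * μf x) = 0 := h1
    exact le_antisymm (tsub_eq_zero_iff_le.1 h1') h2
  have hkey2 : ∀ᵐ x ∂(volume.restrict Ω),
      ENNReal.ofReal (-(B (u₀ x) * μf x)) = ENNReal.ofReal (-(B (v x) * μf x)) := by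
    have hsub := lintegral_sub' hm0' hN₀fin haele'
    have hz' := (lintegral_eq_zero_iff' (hm1'.sub hm0')).1
      (by simp only [Pi.sub_apply]; rw [hsub, hNeq, tsub_self])
    filter_upwards [hz', haele'] with x h1 h2
    have h1' : ENNReal.ofReal (-(B (v x) * μf x)) - ENNReal.ofReal (-(B (u₀ x) * μf x)) = 0 := h1
    exact (le_antisymm (tsub_eq_zero_iff_le.1 h1') h2).symm
  have haeeq : ∀ᵐ x ∂(volume.restrict Ω), B (u₀ x) * μf x = B (v x) * μf x := by
    filter_upwards [hkey1, hkey2] with x h1 h2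
    exact real_eq_of_ofReal h1 h2
  have hμne : ∀ᵐ x ∂(volume.restrict Ω), μf x ≠ 0 := by
    rw [ae_iff, Measure.restrict_apply' hΩopen.measurableSet]
    refine measure_mono_null ?_ hzero
    intro x hx
    exact ⟨hx.2, not_not.mp hx.1⟩
  have hvu : ∀ᵐ x ∂(volume.restrict Ω), v x = u₀ x := by
    filter_upwards [haeeq, hμne] with x h1 h2
    exact hBmono.injective (mul_right_cancel₀ h2 h1.symm)
  -- upgrade to pointwise equality on Ω
  have hEqOn : ∀ y ∈ Ω, v y = u₀ y := by
    intro y hy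
    by_contra hne'
    have hU : IsOpen (Ω ∩ (fun x => v x - u₀ x) ⁻¹' {(0 : ℝ)}ᶜ) :=
      (hvcont.sub hu₀cont).isOpen_inter_preimage hΩopen isOpen_compl_singleton
    have hUne : (Ω ∩ (fun x => v x - u₀ x) ⁻¹' {(0 : ℝ)}ᶜ).Nonempty :=
      ⟨y, hy, by simp [sub_ne_zero.2 hne']⟩
    have hpos := hU.measure_pos volume hUne
    have hnull : volume ({x | ¬ v x = u₀ x} ∩ Ω) = 0 := by
      have := ae_iff.1 hvu
      rwa [Measure.restrict_apply' hΩopen.measurableSet] at this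
    have hzero' : volume (Ω ∩ (fun x => v x - u₀ x) ⁻¹' {(0 : ℝ)}ᶜ) = 0 := by
      refine measure_mono_null ?_ hnull
      rintro x ⟨hx1, hx2⟩
      exact ⟨fun h => hx2 (by simp [h]), hx1⟩
    exact absurd hzero' hpos.ne'
  -- conclusion
  intro x hx
  have h1 : IsLUB (S x) (w x) := isLUB_csSup (hSne x) ⟨u₀ x, hSub x (hΩsub hx)⟩
  have h2 : w x = u₀ x := by rw [← hvΩ x hx]; exact hEqOn x hx
  rwa [h2] at h1

end Main

/-- In the setting of the minimization problem for
`F(u) = ∫_{∂Ω} A(u) dσ + ∫_Ω B(u) μ dx`, a minimizer `u₀ ∈ C(Ω)` coincides on `Ω` with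
the supremum of its affine supports touching at points of `Ω₋`: for every `x ∈ Ω`,
`u₀(x)` is the supremum of `ℓ(x)` over all affine `ℓ ≤ u₀` on `cl(Ω)` with
`ℓ(z) = u₀(z)` for some `z ∈ Ω₋`. -/
theorem stmt6 (n : ℕ) (Ω : Set (Euc n))
    (hΩopen : IsOpen Ω) (hΩbdd : Bornology.IsBounded Ω) (hΩconv : Convex ℝ Ω)
    (σm : Measure (Euc n)) [IsFiniteMeasure σm] (hσsupp : σm (frontier Ω)ᶜ = 0)
    (μf : Euc n → ℝ) (hμcont : ContinuousOn μf (closure Ω))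
    (hne : {x ∈ Ω | μf x < 0}.Nonempty)
    (hLip : ∀ x ∈ {x ∈ Ω | μf x < 0},
      HasLipschitzBoundary (connectedComponentIn {x ∈ Ω | μf x < 0} x))
    (hzero : volume {x ∈ Ω | μf x = 0} = 0)
    (A B : ℝ → ℝ) (hAcont : Continuous A) (hAmono : Monotone A)
    (hBcont : Continuous B) (hBmono : StrictMono B)
    (CΩ : Set (Euc n → ℝ))
    (hCΩ : CΩ = {u | ConvexOn ℝ (closure Ω) u ∧
      IntegrableOn (fun x => |A (u x)|) (frontier Ω) σm})
    (hnegpart : ∀ u ∈ CΩ, IntegrableOn (fun x => max (-(B (u x) * μf x)) 0) Ω volume)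
    (F : (Euc n → ℝ) → EReal)
    (hF : ∀ u, F u = ((∫ x in frontier Ω, A (u x) ∂σm : ℝ) : EReal)
        + ((∫⁻ x in Ω, ENNReal.ofReal (B (u x) * μf x)) : ℝ≥0∞)
        - ((∫⁻ x in Ω, ENNReal.ofReal (-(B (u x) * μf x))) : ℝ≥0∞))
    (u₀ : Euc n → ℝ) (hu₀ : u₀ ∈ CΩ) (hfin : F u₀ < ⊤)
    (hmin : ∀ u ∈ CΩ, F u₀ ≤ F u) :
    ∀ x ∈ Ω,
      IsLUB {t : ℝ | ∃ (p : Euc n) (c : ℝ),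
          (∀ z ∈ closure Ω, ⟪p, z⟫ + c ≤ u₀ z) ∧
          (∃ z ∈ {x ∈ Ω | μf x < 0}, ⟪p, z⟫ + c = u₀ z) ∧
          t = ⟪p, x⟫ + c}
        (u₀ x) := by
  intro x hx
  exact stmt6' n Ω hΩopen hΩbdd hΩconv σm hσsupp μf hμcont hne hzero A B hAcont hAmono
    hBcont hBmono CΩ hCΩ hnegpart F hF u₀ hu₀ hfin hmin x hx
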